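/- Let A, B, C be real n×n matrices with A + Aᵀ positive definite. For q ∈ {1,...,n}, let λ_q(A,·) denote the q-th smallest eigenvalue of ¼(A+Aᵀ)(B+Bᵀ). Then λ_q(A,B) + λ_1(A,C) ≤ λ_q(A, B+C) ≤ λ_q(A,B) + λ_n(A,C). -/

import Mathlib

open Matrix

namespace WeylAux

open Polynomial


variable {n : ℕ}

/-- Orthonormal eigenbasis data for a real matrix, as plain vector families. -/
structure EigData (n : ℕ) (M : Matrix (Fin n) (Fin n) ℝ) (μ : Fin n → ℝ) where
  e : Fin n → (Fin n → ℝ)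
  orth : ∀ i j, e i ⬝ᵥ e j = if i = j then 1 else 0
  complete : ∀ x : Fin n → ℝ, ∑ i, (e i ⬝ᵥ x) • e i = x
  eig : ∀ i, M *ᵥ e i = μ i • e i

noncomputable def eigData_eigenvalues (M : Matrix (Fin n) (Fin n) ℝ) (hM : M.IsHermitian) :
    EigData n M hM.eigenvalues := by
  set U : Matrix (Fin n) (Fin n) ℝ := (hM.eigenvectorUnitary : Matrix (Fin n) (Fin n) ℝ) with hU
  have h1 : star U * U = 1 := mem_unitaryGroup_iff'.mp hM.eigenvectorUnitary.2
  have h2 : U * star U = 1 := mem_unitaryGroup_iff.mp hM.eigenvectorUnitary.2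
  refine ⟨fun i => ⇑(hM.eigenvectorBasis i), ?_, ?_, fun i => hM.mulVec_eigenvectorBasis i⟩
  · intro i j
    have h := congrFun (congrFun h1 i) j
    rw [mul_apply] at h
    simp only [Matrix.star_apply, star_trivial] at h
    have hij : ∀ a b, (⇑(hM.eigenvectorBasis a) : Fin n → ℝ) b = U b a :=
      fun a b => (hM.eigenvectorUnitary_apply b a).symm
    simp only [dotProduct, hij]
    rw [h, one_apply]
  · intro x
    funext k
    have key : ∀ m, ∑ i, U k i * U m i = (1 : Matrix (Fin n) (Fin n) ℝ) k m := by
      intro m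
      have := congrFun (congrFun h2 k) m
      rw [mul_apply] at this
      simpa only [Matrix.star_apply, star_trivial] using this
    have hij : ∀ a b, (⇑(hM.eigenvectorBasis a) : Fin n → ℝ) b = U b a :=
      fun a b => (hM.eigenvectorUnitary_apply b a).symm
    simp only [Finset.sum_apply, Pi.smul_apply, smul_eq_mul, dotProduct, hij]
    calc ∑ i, (∑ m, U m i * x m) * U k i
        = ∑ i, ∑ m, (U k i * U m i) * x m := by
          refine Finset.sum_congr rfl fun i _ => ?_
          rw [Finset.sum_mul]
          exact Finset.sum_congr rfl fun m _ => by ring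
      _ = ∑ m, (∑ i, U k i * U m i) * x m := by
          rw [Finset.sum_comm]
          exact Finset.sum_congr rfl fun m _ => (Finset.sum_mul _ _ _).symm
      _ = x k := by
          simp only [key, one_apply]
          simp

noncomputable def EigData.reindex {M : Matrix (Fin n) (Fin n) ℝ} {μ : Fin n → ℝ}
    (d : EigData n M μ) (σ : Equiv.Perm (Fin n)) : EigData n M (μ ∘ σ) where
  e := d.e ∘ σ
  orth i j := by
    simpa [EmbeddingLike.apply_eq_iff_eq] using d.orth (σ i) (σ j)
  complete x := by
    exact (Fintype.sum_equiv σ _ (fun j => (d.e j ⬝ᵥ x) • d.e j) (fun i => rfl)).trans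
      (d.complete x)
  eig i := d.eig (σ i)

noncomputable def EigData.shift {M : Matrix (Fin n) (Fin n) ℝ} {μ : Fin n → ℝ}
    (d : EigData n M μ) (c : ℝ) :
    EigData n (M + c • (1 : Matrix (Fin n) (Fin n) ℝ)) (fun i => μ i + c) where
  e := d.e
  orth := d.orth
  complete := d.complete
  eig i := by
    rw [add_mulVec, d.eig, smul_mulVec, one_mulVec, add_smul]

variable {M : Matrix (Fin n) (Fin n) ℝ} {μ : Fin n → ℝ}

lemma dotProduct_finsum (x : Fin n → ℝ) (f : Fin n → Fin n → ℝ) :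
    x ⬝ᵥ (∑ i, f i) = ∑ i, x ⬝ᵥ f i := by
  simp only [dotProduct, Finset.sum_apply, Finset.mul_sum]
  exact Finset.sum_comm

lemma mulVec_finsum (M : Matrix (Fin n) (Fin n) ℝ) (f : Fin n → Fin n → ℝ) :
    M *ᵥ (∑ i, f i) = ∑ i, M *ᵥ f i := by
  simp only [← M.mulVecLin_apply]
  exact map_sum M.mulVecLin f Finset.univ

lemma EigData.dot_eq (d : EigData n M μ) (x : Fin n → ℝ) :
    x ⬝ᵥ x = ∑ i, (d.e i ⬝ᵥ x) ^ 2 := by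
  nth_rewrite 2 [← d.complete x]
  rw [dotProduct_finsum]
  refine Finset.sum_congr rfl fun i _ => ?_
  rw [dotProduct_smul, smul_eq_mul, dotProduct_comm x (d.e i)]
  ring

lemma EigData.qf_eq (d : EigData n M μ) (x : Fin n → ℝ) :
    x ⬝ᵥ M *ᵥ x = ∑ i, μ i * (d.e i ⬝ᵥ x) ^ 2 := by
  have hr : ∀ i, μ i * (d.e i ⬝ᵥ x) ^ 2 = (d.e i ⬝ᵥ x) * (μ i * (d.e i ⬝ᵥ x)) :=
    fun i => by ring
  simp only [hr]
  conv_lhs => rw [show M *ᵥ x = M *ᵥ (∑ i, (d.e i ⬝ᵥ x) • d.e i) by rw [d.complete x]]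
  rw [mulVec_finsum, dotProduct_finsum]
  refine Finset.sum_congr rfl fun i _ => ?_
  rw [mulVec_smul, d.eig i]
  rw [dotProduct_smul, dotProduct_smul, dotProduct_comm x (d.e i)]
  simp only [smul_eq_mul]

lemma EigData.coeff_zero (d : EigData n M μ) (s : Set (Fin n)) {x : Fin n → ℝ}
    (hx : x ∈ Submodule.span ℝ (d.e '' s)) {i : Fin n} (hi : i ∉ s) :
    d.e i ⬝ᵥ x = 0 := by
  induction hx using Submodule.span_induction with
  | mem y hy =>
    obtain ⟨j, hj, rfl⟩ := hy
    rw [d.orth i j, if_neg (by rintro rfl; exact hi hj)]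
  | zero => exact dotProduct_zero _
  | add y z _ _ hy hz => rw [dotProduct_add, hy, hz, add_zero]
  | smul c y _ hy => rw [dotProduct_smul, hy, smul_zero]

lemma EigData.mem_span_univ (d : EigData n M μ) (x : Fin n → ℝ) :
    x ∈ Submodule.span ℝ (d.e '' Set.univ) := by
  rw [← d.complete x]
  exact Submodule.sum_mem _ fun i _ =>
    Submodule.smul_mem _ _ (Submodule.subset_span ⟨i, trivial, rfl⟩)

lemma EigData.rayleigh_le (d : EigData n M μ) (s : Set (Fin n)) (r : ℝ)
    (hr : ∀ i ∈ s, μ i ≤ r) {x : Fin n → ℝ}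
    (hx : x ∈ Submodule.span ℝ (d.e '' s)) :
    x ⬝ᵥ M *ᵥ x ≤ r * (x ⬝ᵥ x) := by
  rw [d.qf_eq, d.dot_eq, Finset.mul_sum]
  refine Finset.sum_le_sum fun i _ => ?_
  by_cases hi : i ∈ s
  · exact mul_le_mul_of_nonneg_right (hr i hi) (sq_nonneg _)
  · rw [d.coeff_zero s hx hi]
    simp

lemma EigData.rayleigh_ge (d : EigData n M μ) (s : Set (Fin n)) (r : ℝ)
    (hr : ∀ i ∈ s, r ≤ μ i) {x : Fin n → ℝ}
    (hx : x ∈ Submodule.span ℝ (d.e '' s)) :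
    r * (x ⬝ᵥ x) ≤ x ⬝ᵥ M *ᵥ x := by
  rw [d.qf_eq, d.dot_eq, Finset.mul_sum]
  refine Finset.sum_le_sum fun i _ => ?_
  by_cases hi : i ∈ s
  · exact mul_le_mul_of_nonneg_right (hr i hi) (sq_nonneg _)
  · rw [d.coeff_zero s hx hi]
    simp

lemma EigData.linearIndependent (d : EigData n M μ) : LinearIndependent ℝ d.e := by
  rw [Fintype.linearIndependent_iff]
  intro g hg j
  have h := congrArg (fun y => d.e j ⬝ᵥ y) hg
  simp only [dotProduct_zero] at h
  rw [dotProduct_finsum] at h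
  simp only [dotProduct_smul, d.orth, smul_eq_mul, mul_ite, mul_one, mul_zero] at h
  rwa [Finset.sum_ite_eq Finset.univ j g, if_pos (Finset.mem_univ j)] at h

lemma EigData.finrank_span (d : EigData n M μ) (s : Finset (Fin n)) :
    Module.finrank ℝ (Submodule.span ℝ (d.e '' ↑s)) = s.card := by
  have li : LinearIndependent ℝ (fun i : {i // i ∈ s} => d.e i) :=
    d.linearIndependent.comp _ Subtype.val_injective
  have h := finrank_span_eq_card li
  have hr : (Set.range fun i : {i // i ∈ s} => d.e i) = d.e '' ↑s := by
    rw [show (fun i : {i // i ∈ s} => d.e i) = d.e ∘ Subtype.val from rfl, Set.range_comp,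
      Subtype.range_coe]
  rw [hr, Fintype.card_coe] at h
  exact h

lemma dot_self_pos {x : Fin n → ℝ} (hx : x ≠ 0) : 0 < x ⬝ᵥ x := by
  have hnn : 0 ≤ x ⬝ᵥ x := Finset.sum_nonneg fun i _ => mul_self_nonneg (x i)
  rcases lt_or_eq_of_le hnn with h | h
  · exact h
  · exact absurd ((dotProduct_self_eq_zero (v := x)).mp h.symm) hx

lemma exists_mem_inf (V W : Submodule ℝ (Fin n → ℝ))
    (h : n < Module.finrank ℝ V + Module.finrank ℝ W) :
    ∃ x : Fin n → ℝ, x ≠ 0 ∧ x ∈ V ∧ x ∈ W := by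
  have hsup : Module.finrank ℝ ↥(V ⊔ W) ≤ n := by
    have := Submodule.finrank_le (V ⊔ W)
    rwa [Module.finrank_fin_fun] at this
  have heq := Submodule.finrank_sup_add_finrank_inf_eq V W
  have hpos : 0 < Module.finrank ℝ ↥(V ⊓ W) := by omega
  have hne : V ⊓ W ≠ ⊥ := by
    intro hbot
    rw [hbot, finrank_bot] at hpos
    omega
  obtain ⟨x, hx, hx0⟩ := Submodule.ne_bot_iff _ |>.mp hne
  exact ⟨x, hx0, hx.1, hx.2⟩

lemma weyl_mono {M N : Matrix (Fin n) (Fin n) ℝ} {μ ν : Fin n → ℝ}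
    (dM : EigData n M μ) (dN : EigData n N ν) (hμ : Monotone μ) (hν : Monotone ν)
    (h : ∀ x : Fin n → ℝ, x ⬝ᵥ M *ᵥ x ≤ x ⬝ᵥ N *ᵥ x) (q : Fin n) : μ q ≤ ν q := by
  obtain ⟨x, hx0, hxV, hxW⟩ := exists_mem_inf
      (Submodule.span ℝ (dM.e '' ↑(Finset.Ici q)))
      (Submodule.span ℝ (dN.e '' ↑(Finset.Iic q))) (by
    rw [dM.finrank_span, dN.finrank_span, Fin.card_Ici, Fin.card_Iic]
    have := q.isLt
    omega)
  have h1 : μ q * (x ⬝ᵥ x) ≤ x ⬝ᵥ M *ᵥ x :=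
    dM.rayleigh_ge _ _ (fun i hi => hμ (Finset.mem_Ici.mp (by exact_mod_cast hi))) hxV
  have h2 : x ⬝ᵥ N *ᵥ x ≤ ν q * (x ⬝ᵥ x) :=
    dN.rayleigh_le _ _ (fun i hi => hν (Finset.mem_Iic.mp (by exact_mod_cast hi))) hxW
  have hd := dot_self_pos hx0
  have h3 := le_trans h1 (le_trans (h x) h2)
  exact (mul_le_mul_iff_left₀ hd).mp h3

lemma charpoly_conj (M P Q : Matrix (Fin n) (Fin n) ℝ) (h1 : P * Q = 1) (h2 : Q * P = 1) :
    (P * M * Q).charpoly = M.charpoly := by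
  unfold Matrix.charpoly
  set f : Matrix (Fin n) (Fin n) ℝ →+* Matrix (Fin n) (Fin n) ℝ[X] := (C : ℝ →+* ℝ[X]).mapMatrix with hf
  have hmul : ∀ (X Y : Matrix (Fin n) (Fin n) ℝ), f (X * Y) = f X * f Y :=
    fun X Y => RingHom.map_mul f X Y
  have hone : f 1 = 1 := RingHom.map_one f
  have key : charmatrix (P * M * Q) = f P * charmatrix M * f Q := by
    unfold charmatrix
    rw [mul_sub, sub_mul]
    congr 1
    · rw [mul_assoc, scalar_commute (X : ℝ[X]) (Commute.all _) (f Q), ← mul_assoc,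
        ← hmul, h1, hone, one_mul]
    · rw [← hmul, ← hmul]
  rw [key, det_mul, det_mul]
  have hPQ : (f P).det * (f Q).det = 1 := by
    rw [← det_mul, ← hmul, h1, hone, det_one]
  calc (f P).det * (charmatrix M).det * (f Q).det
      = (charmatrix M).det * ((f P).det * (f Q).det) := by ring
    _ = (charmatrix M).det := by rw [hPQ, mul_one]

lemma charpoly_diagonal (d : Fin n → ℝ) :
    (diagonal d).charpoly = ∏ i, (X - C (d i)) := by
  unfold Matrix.charpoly
  have key : charmatrix (diagonal d) = diagonal (fun i => (X : ℝ[X]) - C (d i)) := by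
    ext i j
    by_cases hij : i = j
    · subst hij
      rw [charmatrix_apply_eq, diagonal_apply_eq, diagonal_apply_eq]
    · rw [charmatrix_apply_ne _ _ _ hij, diagonal_apply_ne _ hij, diagonal_apply_ne _ hij,
        map_zero, neg_zero]
  rw [key, det_diagonal]

lemma roots_charpoly_hermitian (M : Matrix (Fin n) (Fin n) ℝ) (hM : M.IsHermitian) :
    M.charpoly.roots = Multiset.map hM.eigenvalues Finset.univ.val := by
  set U : Matrix (Fin n) (Fin n) ℝ := (hM.eigenvectorUnitary : Matrix (Fin n) (Fin n) ℝ) with hU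
  have h1 : U * star U = 1 := mem_unitaryGroup_iff.mp hM.eigenvectorUnitary.2
  have h2 : star U * U = 1 := mem_unitaryGroup_iff'.mp hM.eigenvectorUnitary.2
  have hspec : M = U * diagonal hM.eigenvalues * star U := by
    have := hM.spectral_theorem
    simpa using this
  have hcp : M.charpoly = (diagonal hM.eigenvalues).charpoly := by
    have hc := charpoly_conj (diagonal hM.eigenvalues) U (star U) h1 h2
    rw [← hspec] at hc
    exact hc
  rw [hcp, charpoly_diagonal]
  rw [Finset.prod_eq_multiset_prod]
  rw [show Multiset.map (fun i => (X : ℝ[X]) - C (hM.eigenvalues i)) Finset.univ.val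
      = Multiset.map (fun a => (X : ℝ[X]) - C a) (Multiset.map hM.eigenvalues Finset.univ.val) by
    rw [Multiset.map_map]; rfl]
  exact roots_multiset_prod_X_sub_C _

lemma sorted_eq {f g : Fin n → ℝ} (hf : Monotone f) (hg : Monotone g)
    (h : Multiset.map f Finset.univ.val = Multiset.map g Finset.univ.val) : f = g := by
  rw [Fin.univ_val_map, Fin.univ_val_map] at h
  exact List.ofFn_injective
    (List.Perm.eq_of_sortedLE hf.sortedLE_ofFn hg.sortedLE_ofFn (Multiset.coe_eq_coe.mp h))

noncomputable def exists_eigData (M : Matrix (Fin n) (Fin n) ℝ) (hM : M.IsHermitian)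
    (μ : Fin n → ℝ) (hμ : Monotone μ)
    (h : M.charpoly.roots = Multiset.map μ Finset.univ.val) : EigData n M μ := by
  set σ := Tuple.sort hM.eigenvalues with hσ
  have hmono : Monotone (hM.eigenvalues ∘ σ) := Tuple.monotone_sort _
  have hmult : Multiset.map μ Finset.univ.val
      = Multiset.map (hM.eigenvalues ∘ σ) Finset.univ.val := by
    rw [← h, roots_charpoly_hermitian M hM]
    rw [show Multiset.map (hM.eigenvalues ∘ σ) Finset.univ.val
        = Multiset.map hM.eigenvalues (Multiset.map σ Finset.univ.val) by
      rw [Multiset.map_map]]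
    congr 1
    exact (Multiset.map_univ_val_equiv σ).symm
  have heq : μ = hM.eigenvalues ∘ σ := sorted_eq hμ hmono hmult
  rw [heq]
  exact (eigData_eigenvalues M hM).reindex σ

lemma qf_add (M N : Matrix (Fin n) (Fin n) ℝ) (x : Fin n → ℝ) :
    x ⬝ᵥ (M + N) *ᵥ x = x ⬝ᵥ M *ᵥ x + x ⬝ᵥ N *ᵥ x := by
  rw [add_mulVec, dotProduct_add]

lemma qf_smul_one (c : ℝ) (x : Fin n → ℝ) :
    x ⬝ᵥ (c • (1 : Matrix (Fin n) (Fin n) ℝ)) *ᵥ x = c * (x ⬝ᵥ x) := by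
  rw [smul_mulVec, one_mulVec, dotProduct_smul, smul_eq_mul]

end WeylAux

open WeylAux

open scoped MatrixOrder

/-- The matrix `¼(A+Aᵀ)(B+Bᵀ)`, whose eigenvalues define `λ(A,B)`. -/
noncomputable def symProd (n : ℕ) (A B : Matrix (Fin n) (Fin n) ℝ) :
    Matrix (Fin n) (Fin n) ℝ :=
  (1 / 4 : ℝ) • ((A + Aᵀ) * (B + Bᵀ))

theorem stmt_9 (n : ℕ) (hn : 0 < n) (A B C : Matrix (Fin n) (Fin n) ℝ)
    (hA : (A + Aᵀ).PosDef)
    (μ ν ξ : Fin n → ℝ) (hμm : Monotone μ) (hνm : Monotone ν) (hξm : Monotone ξ)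
    (hμ : (symProd n A B).charpoly.roots = Multiset.map μ Finset.univ.val)
    (hν : (symProd n A C).charpoly.roots = Multiset.map ν Finset.univ.val)
    (hξ : (symProd n A (B + C)).charpoly.roots = Multiset.map ξ Finset.univ.val)
    (q : Fin n) :
    μ q + ν ⟨0, hn⟩ ≤ ξ q ∧ ξ q ≤ μ q + ν ⟨n - 1, by omega⟩ := by
  classical
  set S := A + Aᵀ with hSdef
  set R := CFC.sqrt S with hRdef
  have hRR : R * R = S := CFC.sqrt_mul_sqrt_self S hA.posSemidef.nonneg
  have hRH : Rᴴ = R := (CFC.sqrt_nonneg S).posSemidef.1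
  have hdet : IsUnit R.det := by
    have h1 : R.det * R.det = S.det := by rw [← det_mul, hRR]
    have h2 : S.det ≠ 0 := ne_of_gt hA.det_pos
    exact isUnit_iff_ne_zero.mpr fun h => h2 (by rw [← h1, h, mul_zero])
  have hPQ : R⁻¹ * R = 1 := nonsing_inv_mul R hdet
  have hQP : R * R⁻¹ = 1 := mul_nonsing_inv R hdet
  -- the conjugated symmetric matrices
  set X : Matrix (Fin n) (Fin n) ℝ → Matrix (Fin n) (Fin n) ℝ :=
    fun D => (1/4 : ℝ) • (R * (D + Dᵀ) * R) with hXdef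
  have hconj : ∀ D, R⁻¹ * (symProd n A D) * R = X D := by
    intro D
    show R⁻¹ * ((1/4 : ℝ) • (S * (D + Dᵀ))) * R = (1/4 : ℝ) • (R * (D + Dᵀ) * R)
    rw [Matrix.mul_smul, Matrix.smul_mul]
    congr 1
    rw [← hRR]
    calc R⁻¹ * (R * R * (D + Dᵀ)) * R
        = (R⁻¹ * R) * (R * (D + Dᵀ) * R) := by noncomm_ring
      _ = R * (D + Dᵀ) * R := by rw [hPQ, one_mul]
  have hcp : ∀ D, (X D).charpoly = (symProd n A D).charpoly := by
    intro D
    rw [← hconj D]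
    exact charpoly_conj _ _ _ hPQ hQP
  have hXH : ∀ D, (X D).IsHermitian := by
    intro D
    have hDs : (D + Dᵀ)ᴴ = D + Dᵀ := by
      rw [conjTranspose_eq_transpose_of_trivial, transpose_add, transpose_transpose, add_comm]
    show (X D)ᴴ = X D
    rw [hXdef]
    simp only
    rw [conjTranspose_smul, conjTranspose_mul, conjTranspose_mul, hDs, hRH]
    rw [star_trivial, Matrix.mul_assoc]
  -- eigen data
  have dB : EigData n (X B) μ := exists_eigData _ (hXH B) μ hμm (by rw [hcp B]; exact hμ)
  have dC : EigData n (X C) ν := exists_eigData _ (hXH C) ν hνm (by rw [hcp C]; exact hν)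
  have dBC : EigData n (X (B + C)) ξ := exists_eigData _ (hXH (B + C)) ξ hξm
    (by rw [hcp (B + C)]; exact hξ)
  have hsum : X B + X C = X (B + C) := by
    rw [hXdef]
    simp only
    rw [transpose_add, ← smul_add]
    congr 1
    noncomm_ring
  set ν0 := ν ⟨0, hn⟩ with hν0
  set ν1 := ν ⟨n - 1, by omega⟩ with hν1
  have hCl : ∀ x : Fin n → ℝ, ν0 * (x ⬝ᵥ x) ≤ x ⬝ᵥ (X C) *ᵥ x := fun x =>
    dC.rayleigh_ge Set.univ ν0 (fun i _ => hνm (by exact Fin.mk_le_of_le_val (Nat.zero_le _)))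
      (dC.mem_span_univ x)
  have hCu : ∀ x : Fin n → ℝ, x ⬝ᵥ (X C) *ᵥ x ≤ ν1 * (x ⬝ᵥ x) := fun x =>
    dC.rayleigh_le Set.univ ν1 (fun i _ => hνm (by
      rw [Fin.le_def]
      exact Nat.le_pred_of_lt i.isLt)) (dC.mem_span_univ x)
  constructor
  · have d1 : EigData n (X B + ν0 • (1 : Matrix (Fin n) (Fin n) ℝ)) (fun i => μ i + ν0) :=
      dB.shift ν0
    have := weyl_mono d1 dBC (fun i j hij => by
        simpa using add_le_add_right (hμm hij) ν0) hξm (fun x => by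
      rw [qf_add, qf_smul_one, ← hsum, qf_add]
      exact add_le_add_right (hCl x) _) q
    exact this
  · have d1 : EigData n (X B + ν1 • (1 : Matrix (Fin n) (Fin n) ℝ)) (fun i => μ i + ν1) :=
      dB.shift ν1
    have := weyl_mono dBC d1 hξm (fun i j hij => by
        simpa using add_le_add_right (hμm hij) ν1) (fun x => by
      rw [qf_add, qf_smul_one, ← hsum, qf_add]
      exact add_le_add_right (hCu x) _) q
    exact this
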